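/- Set ϖ_i := (1/p)·Σ_{j=1}^{p−1} j·D_{i,j} for 1 ≤ i ≤ ν, and let D denote the ℤ-span of the basis vectors D_{i,j}. Then the dual lattice N^∨ of the Nikulin lattice N = N_p equals the set of all elements of the form d + Σ_{i=1}^{ν} l_i·ϖ_i with d ∈ D, l_1, …, l_ν ∈ ℤ and Σ_{i=1}^{ν} k_i l_i ≡ 0 (mod p). -/

import Mathlib

open scoped BigOperators

namespace Nikulin

noncomputable section

/-- Index set for the basis vectors `D_{i,j}`, `1 ≤ i ≤ ν`, `1 ≤ j ≤ p−1`. -/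
abbrev Idx (p ν : ℕ) := Fin ν × Fin (p - 1)

variable (p ν : ℕ)

/-- The Gram matrix of the form `B` on the basis `D_{i,j}`:
`B(D_{i,j}, D_{i,j}) = −2`, `B(D_{i,j}, D_{i,j±1}) = 1`, all other entries `0`. -/
def gram (a b : Idx p ν) : ℚ :=
  if a.1 = b.1 then
    if a.2 = b.2 then -2
    else if a.2.1 + 1 = b.2.1 ∨ b.2.1 + 1 = a.2.1 then 1 else 0
  else 0

/-- The symmetric bilinear form `B` on `V`, the bilinear extension of the Gram matrix. -/
def Bf : (Idx p ν → ℚ) →ₗ[ℚ] (Idx p ν → ℚ) →ₗ[ℚ] ℚ :=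
  LinearMap.mk₂ ℚ (fun x y => ∑ a : Idx p ν, ∑ b : Idx p ν, x a * gram p ν a b * y b)
    (by
      intro x x' y
      rw [← Finset.sum_add_distrib]
      refine Finset.sum_congr rfl fun a _ => ?_
      rw [← Finset.sum_add_distrib]
      refine Finset.sum_congr rfl fun b _ => ?_
      simp only [Pi.add_apply]; ring)
    (by
      intro c x y
      rw [Finset.smul_sum]
      refine Finset.sum_congr rfl fun a _ => ?_
      rw [Finset.smul_sum]
      refine Finset.sum_congr rfl fun b _ => ?_
      simp only [Pi.smul_apply, smul_eq_mul]; ring)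
    (by
      intro x y y'
      rw [← Finset.sum_add_distrib]
      refine Finset.sum_congr rfl fun a _ => ?_
      rw [← Finset.sum_add_distrib]
      refine Finset.sum_congr rfl fun b _ => ?_
      simp only [Pi.add_apply]; ring)
    (by
      intro c x y
      rw [Finset.smul_sum]
      refine Finset.sum_congr rfl fun a _ => ?_
      rw [Finset.smul_sum]
      refine Finset.sum_congr rfl fun b _ => ?_
      simp only [Pi.smul_apply, smul_eq_mul]; ring)

/-- The basis vector `D_{i,j}` (the index `q = (i, j)` with `j ∈ Fin (p−1)` representing
`j+1 ∈ {1, …, p−1}`). -/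
def Dv (q : Idx p ν) : Idx p ν → ℚ := Pi.single q 1

variable (k : Fin ν → ℤ)

/-- The vector `ϖ = Σ_i (k_i/p) Σ_j j·D_{i,j}`. -/
def varpi : Idx p ν → ℚ := fun q => (k q.1 : ℚ) * ((q.2.1 : ℚ) + 1) / p

/-- The Nikulin lattice `N_p`, generated by the `D_{i,j}` together with `ϖ`. -/
def NL : AddSubgroup (Idx p ν → ℚ) :=
  AddSubgroup.closure (Set.range (Dv p ν) ∪ {varpi p ν k})

/-- The Weyl vector `ϱ = −(1/2) Σ_i Σ_j j(p−j)·D_{i,j}`. -/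
def rho : Idx p ν → ℚ :=
  fun q => -(((q.2.1 : ℚ) + 1) * ((p : ℚ) - ((q.2.1 : ℚ) + 1)) / 2)

/-- The lattice `L_p = {x ∈ N_p : B(ϱ, x) ∈ pℤ}`. -/
def LL : AddSubgroup (Idx p ν → ℚ) where
  carrier := {x | x ∈ NL p ν k ∧ ∃ m : ℤ, Bf p ν (rho p ν) x = (p : ℚ) * m}
  zero_mem' := ⟨(NL p ν k).zero_mem, 0, by simp⟩
  add_mem' := by
    rintro a b ⟨haN, ma, hma⟩ ⟨hbN, mb, hmb⟩
    exact ⟨add_mem haN hbN, ma + mb, by rw [map_add, hma, hmb]; push_cast; ring⟩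
  neg_mem' := by
    rintro a ⟨haN, ma, hma⟩
    exact ⟨neg_mem haN, -ma, by rw [map_neg, hma]; push_cast; ring⟩

/-- The dual lattice `S^∨ = {y ∈ V : B(y, s) ∈ ℤ for all s ∈ S}`. -/
def dual (S : AddSubgroup (Idx p ν → ℚ)) : AddSubgroup (Idx p ν → ℚ) where
  carrier := {y | ∀ s ∈ S, ∃ m : ℤ, Bf p ν y s = (m : ℚ)}
  zero_mem' := by
    intro s hs
    exact ⟨0, by simp⟩
  add_mem' := by
    rintro a b ha hb s hs
    obtain ⟨ma, hma⟩ := ha s hs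
    obtain ⟨mb, hmb⟩ := hb s hs
    exact ⟨ma + mb, by rw [map_add, LinearMap.add_apply, hma, hmb]; push_cast; ring⟩
  neg_mem' := by
    rintro a ha s hs
    obtain ⟨m, hm⟩ := ha s hs
    exact ⟨-m, by rw [map_neg, LinearMap.neg_apply, hm]; push_cast; ring⟩

/-- The list of admissible data `(p, ν, k)`:
`(2, 8, (1,…,1))`, `(3, 6, (1,…,1))`, `(5, 4, (1,1,2,2))`, `(7, 3, (1,2,3))`. -/
def goodCase : Prop :=
  (p = 2 ∧ ∃ h : ν = 8, ∀ i, k i = ![1, 1, 1, 1, 1, 1, 1, 1] (Fin.cast h i)) ∨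
  (p = 3 ∧ ∃ h : ν = 6, ∀ i, k i = ![1, 1, 1, 1, 1, 1] (Fin.cast h i)) ∨
  (p = 5 ∧ ∃ h : ν = 4, ∀ i, k i = ![1, 1, 2, 2] (Fin.cast h i)) ∨
  (p = 7 ∧ ∃ h : ν = 3, ∀ i, k i = ![1, 2, 3] (Fin.cast h i))

end

end Nikulin

namespace Nikulin

noncomputable section
variable (p ν : ℕ)

/-- The fundamental weight vector `ϖ_i = (1/p) Σ_j j·D_{i,j}`. -/
def varpI (i : Fin ν) : Idx p ν → ℚ :=
  fun q => if q.1 = i then ((q.2.1 : ℚ) + 1) / p else 0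

end

end Nikulin

namespace Nikulin

noncomputable section

variable (p ν : ℕ)

/-- Extension of a vector by zero to `ℤ`-indexed coordinates. -/
def extF (x : Idx p ν → ℚ) (i : Fin ν) (t : ℤ) : ℚ :=
  if h : 0 ≤ t ∧ t < ((p - 1 : ℕ) : ℤ) then x (i, ⟨t.toNat, by omega⟩) else 0

variable {p ν}

lemma extF_of_lt (x : Idx p ν → ℚ) (i : Fin ν) (t : ℕ) (h : t < p - 1) :
    extF p ν x i (t : ℤ) = x (i, ⟨t, h⟩) := by
  rw [extF, dif_pos ⟨by omega, by exact_mod_cast h⟩]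
  congr 1

lemma extF_of_out (x : Idx p ν → ℚ) (i : Fin ν) (t : ℤ)
    (h : t < 0 ∨ ((p - 1 : ℕ) : ℤ) ≤ t) : extF p ν x i t = 0 :=
  dif_neg (by omega)

lemma gram_symm (a b : Idx p ν) : gram p ν a b = gram p ν b a := by
  unfold gram
  rcases a with ⟨i, j⟩; rcases b with ⟨i', j'⟩
  by_cases h1 : i = i'
  · subst h1
    simp only [if_pos rfl]
    by_cases h2 : j = j'
    · subst h2; simp
    · rw [if_neg h2, if_neg (Ne.symm h2)]
      by_cases h3 : j.1 + 1 = j'.1 ∨ j'.1 + 1 = j.1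
      · rw [if_pos h3, if_pos (Or.symm h3)]
      · rw [if_neg h3, if_neg (fun hc => h3 (Or.symm hc))]
  · rw [if_neg h1, if_neg (Ne.symm h1)]

lemma Bf_apply (x z : Idx p ν → ℚ) :
    Bf p ν x z = ∑ a : Idx p ν, ∑ b : Idx p ν, x a * gram p ν a b * z b := rfl

lemma Bf_symm (x z : Idx p ν → ℚ) : Bf p ν x z = Bf p ν z x := by
  rw [Bf_apply, Bf_apply, Finset.sum_comm]
  refine Finset.sum_congr rfl fun a _ => Finset.sum_congr rfl fun b _ => ?_
  rw [gram_symm]; ring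

lemma Bf_eq_sum (x z : Idx p ν → ℚ) :
    Bf p ν x z = ∑ b : Idx p ν, z b * ∑ a : Idx p ν, x a * gram p ν a b := by
  rw [Bf_apply, Finset.sum_comm]
  refine Finset.sum_congr rfl fun b _ => ?_
  rw [Finset.mul_sum]
  exact Finset.sum_congr rfl fun a _ => by ring

lemma Bf_Dv (x : Idx p ν → ℚ) (q : Idx p ν) :
    Bf p ν x (Dv p ν q) = ∑ a : Idx p ν, x a * gram p ν a q := by
  rw [Bf_eq_sum]
  rw [Finset.sum_eq_single q]
  · simp [Dv, Pi.single_apply]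
  · intro b _ hb
    simp [Dv, Pi.single_apply, if_neg hb]
  · intro h; exact absurd (Finset.mem_univ q) h

lemma Bf_expand (x z : Idx p ν → ℚ) :
    Bf p ν x z = ∑ q : Idx p ν, z q * Bf p ν x (Dv p ν q) := by
  rw [Bf_eq_sum]
  exact Finset.sum_congr rfl fun q _ => by rw [Bf_Dv]

/-- The key row computation: pairing with a basis vector is a discrete Laplacian. -/
lemma Bf_Dv_row (x : Idx p ν → ℚ) (q : Idx p ν) :
    Bf p ν x (Dv p ν q) =
      extF p ν x q.1 ((q.2.1 : ℤ) - 1) - 2 * x q + extF p ν x q.1 ((q.2.1 : ℤ) + 1) := by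
  obtain ⟨i, j⟩ := q
  rw [Bf_Dv, Fintype.sum_prod_type]
  rw [Finset.sum_eq_single i]
  rotate_left
  · intro i' _ hi'
    refine Finset.sum_eq_zero fun j' _ => ?_
    simp [gram, hi']
  · intro h; exact absurd (Finset.mem_univ i) h
  have hterm : ∀ j' : Fin (p - 1), x (i, j') * gram p ν (i, j') (i, j)
      = (if j' = j then -2 * x (i, j') else 0)
        + (if j'.1 + 1 = j.1 then x (i, j') else 0)
        + (if j'.1 = j.1 + 1 then x (i, j') else 0) := by
    intro j'
    simp only [gram, if_pos rfl, Fin.ext_iff]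
    split_ifs <;> try omega
    all_goals ring
  rw [Finset.sum_congr rfl fun j' _ => hterm j', Finset.sum_add_distrib,
    Finset.sum_add_distrib]
  have hA : (∑ j' : Fin (p - 1), if j' = j then -2 * x (i, j') else 0)
      = -2 * x (i, j) := by
    rw [Finset.sum_ite_eq' Finset.univ j fun j' => -2 * x (i, j')]
    simp
  have hB : (∑ j' : Fin (p - 1), if j'.1 + 1 = j.1 then x (i, j') else 0)
      = extF p ν x i ((j.1 : ℤ) - 1) := by
    rcases Nat.eq_zero_or_pos j.1 with h0 | hpos
    · rw [Finset.sum_eq_zero fun b _ => if_neg (by omega),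
        extF_of_out _ _ _ (Or.inl (by omega))]
    · obtain ⟨m, hm⟩ : ∃ m, j.1 = m + 1 := ⟨j.1 - 1, by omega⟩
      have hmlt : m < p - 1 := by have := j.2; omega
      rw [show ((j.1 : ℤ) - 1) = ((m : ℕ) : ℤ) by omega, extF_of_lt x i m hmlt]
      rw [Finset.sum_eq_single (⟨m, hmlt⟩ : Fin (p - 1))]
      · rw [if_pos (by simp [hm])]
      · intro b _ hb
        exact if_neg fun hc => hb (Fin.ext (by simp only [Fin.val_mk]; omega))
      · intro h; exact absurd (Finset.mem_univ _) h
  have hC : (∑ j' : Fin (p - 1), if j'.1 = j.1 + 1 then x (i, j') else 0)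
      = extF p ν x i ((j.1 : ℤ) + 1) := by
    by_cases hlt : j.1 + 1 < p - 1
    · rw [show ((j.1 : ℤ) + 1) = ((j.1 + 1 : ℕ) : ℤ) by omega, extF_of_lt x i _ hlt]
      rw [Finset.sum_eq_single (⟨j.1 + 1, hlt⟩ : Fin (p - 1))]
      · rw [if_pos rfl]
      · intro b _ hb
        exact if_neg fun hc => hb (Fin.ext (by simp only [Fin.val_mk]; omega))
      · intro h; exact absurd (Finset.mem_univ _) h
    · rw [extF_of_out _ _ _ (Or.inr (by omega)),
        Finset.sum_eq_zero fun b _ => if_neg (by have := b.2; omega)]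
  rw [hA, hB, hC]
  ring

lemma exists_int_sum {α : Type*} (s : Finset α) (f : α → ℚ)
    (h : ∀ a ∈ s, ∃ m : ℤ, f a = m) : ∃ m : ℤ, ∑ a ∈ s, f a = m := by
  classical
  induction s using Finset.induction_on with
  | empty => exact ⟨0, by simp⟩
  | insert a s hna ih =>
    obtain ⟨m, hm⟩ := h a (Finset.mem_insert_self a s)
    obtain ⟨m', hm'⟩ := ih fun b hb => h b (Finset.mem_insert_of_mem hb)
    exact ⟨m + m', by rw [Finset.sum_insert hna, hm, hm']; push_cast; ring⟩

lemma mem_closure_Dv_iff (x : Idx p ν → ℚ) :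
    x ∈ AddSubgroup.closure (Set.range (Dv p ν)) ↔ ∀ q, ∃ m : ℤ, x q = m := by
  constructor
  · intro hx
    let Z : AddSubgroup (Idx p ν → ℚ) :=
      { carrier := {z | ∀ q, ∃ m : ℤ, z q = m}
        zero_mem' := fun q => ⟨0, by simp⟩
        add_mem' := by
          rintro a b ha hb q
          obtain ⟨m, hm⟩ := ha q
          obtain ⟨m', hm'⟩ := hb q
          exact ⟨m + m', by simp [hm, hm']⟩
        neg_mem' := by
          rintro a ha q
          obtain ⟨m, hm⟩ := ha q
          exact ⟨-m, by simp [hm]⟩ }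
    have hle : AddSubgroup.closure (Set.range (Dv p ν)) ≤ Z := by
      rw [AddSubgroup.closure_le]
      rintro z ⟨q', rfl⟩ q
      by_cases h : q = q'
      · exact ⟨1, by simp [Dv, Pi.single_apply, h]⟩
      · exact ⟨0, by simp [Dv, Pi.single_apply, h]⟩
    exact hle hx
  · intro h
    choose m hm using h
    have hx : x = ∑ q : Idx p ν, (m q : ℚ) • Dv p ν q := by
      funext b
      rw [Finset.sum_apply]
      simp only [Pi.smul_apply, Dv, Pi.single_apply, smul_eq_mul, mul_ite, mul_one, mul_zero]
      rw [Finset.sum_ite_eq]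
      simp [hm b]
    rw [hx]
    exact AddSubgroup.sum_mem _ fun q _ => by
      rw [Int.cast_smul_eq_zsmul]
      exact zsmul_mem (AddSubgroup.subset_closure (Set.mem_range_self q)) _

lemma varpi_eq (k : Fin ν → ℤ) :
    varpi p ν k = ∑ i, (k i : ℚ) • varpI p ν i := by
  funext q
  rw [Finset.sum_apply]
  simp only [Pi.smul_apply, varpI, smul_eq_mul, mul_ite, mul_zero]
  rw [Finset.sum_ite_eq]
  simp [varpi, mul_div_assoc]

lemma Bf_varpI_Dv (i : Fin ν) (q : Idx p ν) :
    Bf p ν (varpI p ν i) (Dv p ν q) = if q.1 = i ∧ q.2.1 + 2 = p then -1 else 0 := by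
  obtain ⟨i', j⟩ := q
  have hp2 : 2 ≤ p := by have := j.2; omega
  have hp0 : (p : ℚ) ≠ 0 := by positivity
  rw [Bf_Dv_row]
  by_cases hi : i' = i
  · subst hi
    have hmid : varpI p ν i' (i', j) = ((j.1 : ℚ) + 1) / p := by
      simp [varpI]
    have hL : extF p ν (varpI p ν i') i' ((j.1 : ℤ) - 1) = (j.1 : ℚ) / p := by
      rcases Nat.eq_zero_or_pos j.1 with h0 | hpos
      · rw [extF_of_out _ _ _ (Or.inl (by omega))]
        simp [h0]
      · rw [show ((j.1 : ℤ) - 1) = ((j.1 - 1 : ℕ) : ℤ) by omega,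
          extF_of_lt _ _ _ (by have := j.2; omega)]
        simp only [varpI, eq_self_iff_true, if_true, Fin.val_mk]
        rw [Nat.cast_sub (by omega : 1 ≤ j.1)]
        ring
    have hR : extF p ν (varpI p ν i') i' ((j.1 : ℤ) + 1)
        = if j.1 + 2 = p then 0 else ((j.1 : ℚ) + 2) / p := by
      by_cases hr : j.1 + 1 < p - 1
      · rw [show ((j.1 : ℤ) + 1) = ((j.1 + 1 : ℕ) : ℤ) by omega,
          extF_of_lt _ _ _ hr, if_neg (by omega)]
        simp only [varpI, eq_self_iff_true, if_true, Fin.val_mk]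
        push_cast
        ring
      · rw [extF_of_out _ _ _ (Or.inr (by omega)), if_pos (by have := j.2; omega)]
    rw [hL, hmid, hR]
    by_cases hj : j.1 + 2 = p
    · rw [if_pos hj, if_pos ⟨rfl, hj⟩]
      have hc : ((j.1 : ℚ)) = (p : ℚ) - 2 := by
        have := congrArg (fun t : ℕ => (t : ℚ)) hj
        push_cast at this
        linarith
      rw [hc]
      field_simp
      ring
    · rw [if_neg hj, if_neg (fun hc => hj hc.2)]
      field_simp
      ring
  · have hz : ∀ t, extF p ν (varpI p ν i) i' t = 0 := by
      intro t
      unfold extF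
      split_ifs with h
      · simp [varpI, hi]
      · rfl
    rw [hz, hz]
    simp [varpI, hi]

/-- Key integrality: if `x` pairs integrally with all basis vectors and the weighted sums
are divisible by `p`, then `x` has integer coordinates. -/
lemma key_int (hp2 : 2 ≤ p) (x : Idx p ν → ℚ) (c : Idx p ν → ℤ)
    (hx : ∀ q, Bf p ν x (Dv p ν q) = (c q : ℚ))
    (hdvd : ∀ i, (p : ℤ) ∣ ∑ j : Fin (p - 1), ((j.1 : ℤ) + 1) * c (i, j)) :
    ∀ q, ∃ m : ℤ, x q = m := by
  have hp0 : (p : ℚ) ≠ 0 := by positivity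
  rintro ⟨i, j⟩
  -- integer coefficients as a function on ℕ
  let cN : ℕ → ℤ := fun m => if h : m < p - 1 then c (i, ⟨m, h⟩) else 0
  have hcN : ∀ (m : ℕ) (h : m < p - 1), cN m = c (i, ⟨m, h⟩) := fun m h => dif_pos h
  -- the Laplacian relations
  have hrel : ∀ (t : ℕ), t < p - 1 →
      extF p ν x i ((t : ℤ) - 1) - 2 * extF p ν x i (t : ℤ) + extF p ν x i ((t : ℤ) + 1)
        = (cN t : ℚ) := by
    intro t ht
    have h1 := hx (i, ⟨t, ht⟩)
    rw [Bf_Dv_row] at h1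
    rw [← extF_of_lt x i t ht] at h1
    rw [hcN t ht]
    exact h1
  -- first telescoping: differences
  have hG : ∀ t : ℕ, t ≤ p - 1 →
      extF p ν x i (t : ℤ) - extF p ν x i ((t : ℤ) - 1)
        = extF p ν x i 0 + ∑ m ∈ Finset.range t, (cN m : ℚ) := by
    intro t
    induction t with
    | zero =>
      intro _
      have h1 : extF p ν x i ((0 : ℕ) : ℤ) - extF p ν x i (((0 : ℕ) : ℤ) - 1)
          = extF p ν x i 0 - extF p ν x i (-1) := by norm_num
      rw [h1, extF_of_out x i (-1) (Or.inl (by omega))]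
      simp
    | succ t iht =>
      intro ht
      have hr := hrel t (by omega)
      have h1 := iht (by omega)
      have a1 : ((t + 1 : ℕ) : ℤ) = (t : ℤ) + 1 := by push_cast; ring
      rw [a1, show ((t : ℤ) + 1 - 1) = (t : ℤ) from by ring, Finset.sum_range_succ]
      linarith
  -- second telescoping: values
  have hE : ∀ t : ℕ, t ≤ p - 1 →
      extF p ν x i (t : ℤ)
        = ((t : ℚ) + 1) * extF p ν x i 0
          + ∑ m ∈ Finset.range t, ((t : ℚ) - (m : ℚ)) * (cN m : ℚ) := by
    intro t
    induction t with
    | zero =>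
      intro _
      simp
    | succ t iht =>
      intro ht
      have h1 := iht (by omega)
      have hg := hG (t + 1) ht
      have a1 : ((t + 1 : ℕ) : ℤ) = (t : ℤ) + 1 := by push_cast; ring
      rw [a1, show ((t : ℤ) + 1 - 1) = (t : ℤ) from by ring, Finset.sum_range_succ] at hg
      rw [a1] at *
      rw [Finset.sum_range_succ]
      have hcoef : ∑ m ∈ Finset.range t, (((t + 1 : ℕ) : ℚ) - (m : ℚ)) * (cN m : ℚ)
          = (∑ m ∈ Finset.range t, ((t : ℚ) - (m : ℚ)) * (cN m : ℚ))
            + ∑ m ∈ Finset.range t, (cN m : ℚ) := by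
        rw [← Finset.sum_add_distrib]
        exact Finset.sum_congr rfl fun m _ => by push_cast; ring
      rw [hcoef]
      push_cast at h1 hg ⊢
      linarith
  -- boundary value gives the value of `x (i, 0)`
  have hzero : extF p ν x i ((p - 1 : ℕ) : ℤ) = 0 := extF_of_out _ _ _ (Or.inr le_rfl)
  have hEn := hE (p - 1) le_rfl
  rw [hzero] at hEn
  have hn1 : ((p - 1 : ℕ) : ℚ) = (p : ℚ) - 1 := by
    rw [Nat.cast_sub (by omega)]
    norm_num
  -- divisibility: convert the Fin-sum to a range-sum
  obtain ⟨md, hmd⟩ := hdvd i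
  have hfin : ∑ j' : Fin (p - 1), ((j'.1 : ℤ) + 1) * c (i, j')
      = ∑ m ∈ Finset.range (p - 1), ((m : ℤ) + 1) * cN m := by
    rw [← Fin.sum_univ_eq_sum_range (fun m => ((m : ℤ) + 1) * cN m) (p - 1)]
    refine Finset.sum_congr rfl fun j' _ => ?_
    rw [hcN j'.1 j'.2]
  rw [hfin] at hmd
  -- value of `x (i,0)`
  have he0 : extF p ν x i 0 = ((md - ∑ m ∈ Finset.range (p - 1), cN m : ℤ) : ℚ) := by
    apply mul_left_cancel₀ hp0
    have hcast : (∑ m ∈ Finset.range (p - 1), ((m : ℚ) + 1) * (cN m : ℚ)) = (p : ℚ) * md := by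
      have := congrArg (fun t : ℤ => (t : ℚ)) hmd
      push_cast at this
      convert this using 2
    have hsum : (∑ m ∈ Finset.range (p - 1), ((p : ℚ) - 1 - (m : ℚ)) * (cN m : ℚ))
        + ∑ m ∈ Finset.range (p - 1), ((m : ℚ) + 1) * (cN m : ℚ)
        = (p : ℚ) * ∑ m ∈ Finset.range (p - 1), (cN m : ℚ) := by
      rw [← Finset.sum_add_distrib, Finset.mul_sum]
      refine Finset.sum_congr rfl fun m _ => ?_
      ring
    have hEn' : 0 = (((p - 1 : ℕ) : ℚ) + 1) * extF p ν x i 0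
        + ∑ m ∈ Finset.range (p - 1), (((p - 1 : ℕ) : ℚ) - (m : ℚ)) * (cN m : ℚ) := hEn
    rw [hn1] at hEn'
    have hEn'' : 0 = (p : ℚ) * extF p ν x i 0
        + ∑ m ∈ Finset.range (p - 1), ((p : ℚ) - 1 - (m : ℚ)) * (cN m : ℚ) := by
      rw [hEn']
      congr 1
      ring
    push_cast
    linarith
  -- final assembly
  refine ⟨(∑ m ∈ Finset.range j.1, ((j.1 : ℤ) - m) * cN m)
    + ((j.1 : ℤ) + 1) * (md - ∑ m ∈ Finset.range (p - 1), cN m), ?_⟩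
  have hxj : extF p ν x i (j.1 : ℤ) = x (i, j) := by
    rw [extF_of_lt x i j.1 j.2]
  rw [← hxj, hE j.1 (by omega), he0]
  push_cast
  ring

lemma Bf_varpI_varpi (hp2 : 2 ≤ p) (k : Fin ν → ℤ) (i : Fin ν) :
    Bf p ν (varpI p ν i) (varpi p ν k) = -(k i : ℚ) * ((p : ℚ) - 1) / p := by
  have hp0 : (p : ℚ) ≠ 0 := by positivity
  rw [Bf_expand, Fintype.sum_prod_type]
  rw [Finset.sum_eq_single i]
  · rw [Finset.sum_eq_single (⟨p - 2, by omega⟩ : Fin (p - 1))]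
    · rw [Bf_varpI_Dv, if_pos ⟨rfl, by simp only [Fin.val_mk]; omega⟩]
      simp only [varpi, Fin.val_mk]
      have h2 : ((p - 2 : ℕ) : ℚ) = (p : ℚ) - 2 := by
        rw [Nat.cast_sub (by omega)]
        norm_num
      rw [h2]
      have h3 : (p : ℚ) - 2 + 1 = (p : ℚ) - 1 := by ring
      rw [h3]
      ring
    · intro b _ hb
      rw [Bf_varpI_Dv, if_neg, mul_zero]
      rintro ⟨-, hc⟩
      have hc' : b.1 + 2 = p := hc
      exact hb (Fin.ext (show b.1 = p - 2 by omega))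
    · intro h; exact absurd (Finset.mem_univ _) h
  · intro i' _ hi'
    refine Finset.sum_eq_zero fun j _ => ?_
    rw [Bf_varpI_Dv, if_neg (fun hc => hi' hc.1), mul_zero]
  · intro h; exact absurd (Finset.mem_univ _) h

end

end Nikulin

open Nikulin

/-- The dual of the Nikulin lattice consists of the elements `d + Σ l_i ϖ_i` with `d` in the span of the `D_{i,j}` and `Σ k_i l_i ≡ 0 (mod p)`. -/
theorem nikulinLattice_dual_description (p ν : ℕ) (k : Fin ν → ℤ) (hk : goodCase p ν k) :
    ∀ y : Idx p ν → ℚ,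
      y ∈ dual p ν (NL p ν k) ↔
        ∃ d ∈ AddSubgroup.closure (Set.range (Dv p ν)), ∃ l : Fin ν → ℤ,
          (p : ℤ) ∣ (∑ i, k i * l i) ∧ y = d + ∑ i, (l i : ℚ) • varpI p ν i := by
  have hp2 : 2 ≤ p := by
    rcases hk with ⟨h, -⟩ | ⟨h, -⟩ | ⟨h, -⟩ | ⟨h, -⟩ <;> omega
  have hp0 : (p : ℚ) ≠ 0 := by positivity
  intro y
  constructor
  · intro hy
    have hy' : ∀ s ∈ NL p ν k, ∃ m : ℤ, Bf p ν y s = (m : ℚ) := hy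
    have hDv : ∀ q, Dv p ν q ∈ NL p ν k := fun q =>
      AddSubgroup.subset_closure (Or.inl (Set.mem_range_self q))
    choose c hc using fun q => hy' (Dv p ν q) (hDv q)
    set l : Fin ν → ℤ := fun i => ∑ j : Fin (p - 1), ((j.1 : ℤ) + 1) * c (i, j) with hl
    have hli : ∀ i, l i = ∑ j : Fin (p - 1), ((j.1 : ℤ) + 1) * c (i, j) := fun i => rfl
    set d : Idx p ν → ℚ := y - ∑ i, (l i : ℚ) • varpI p ν i with hd
    have hBfd : ∀ q, Bf p ν d (Dv p ν q)
        = ((c q + if q.2.1 + 2 = p then l q.1 else 0 : ℤ) : ℚ) := by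
      intro q
      rw [hd, map_sub, LinearMap.sub_apply, map_sum, LinearMap.sum_apply]
      rw [hc q]
      have hterm : ∀ i, (Bf p ν ((l i : ℚ) • varpI p ν i)) (Dv p ν q)
          = (l i : ℚ) * (if q.1 = i ∧ q.2.1 + 2 = p then (-1 : ℚ) else 0) := by
        intro i
        rw [map_smul, LinearMap.smul_apply, Bf_varpI_Dv, smul_eq_mul]
      rw [Finset.sum_congr rfl fun i _ => hterm i]
      by_cases hq : q.2.1 + 2 = p
      · rw [if_pos hq]
        have heval : ∑ i, (l i : ℚ) * (if q.1 = i ∧ q.2.1 + 2 = p then (-1 : ℚ) else 0)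
            = -(l q.1 : ℚ) := by
          simp only [hq, and_true, mul_ite, mul_neg_one, mul_zero]
          rw [Finset.sum_ite_eq]
          simp
        rw [heval]
        push_cast
        ring
      · rw [if_neg hq]
        have heval : ∑ i, (l i : ℚ) * (if q.1 = i ∧ q.2.1 + 2 = p then (-1 : ℚ) else 0) = 0 :=
          Finset.sum_eq_zero fun i _ => by rw [if_neg fun hcon => hq hcon.2, mul_zero]
        rw [heval]
        push_cast
        ring
    have hdvd' : ∀ i, (p : ℤ) ∣ ∑ j : Fin (p - 1),
        ((j.1 : ℤ) + 1) * (c (i, j) + if (i, j).2.1 + 2 = p then l (i, j).1 else 0) := by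
      intro i
      have hsplit : ∑ j : Fin (p - 1),
          ((j.1 : ℤ) + 1) * (c (i, j) + if (i, j).2.1 + 2 = p then l (i, j).1 else 0)
          = (∑ j : Fin (p - 1), ((j.1 : ℤ) + 1) * c (i, j))
            + ∑ j : Fin (p - 1), ((j.1 : ℤ) + 1) * (if j.1 + 2 = p then l i else 0) := by
        rw [← Finset.sum_add_distrib]
        refine Finset.sum_congr rfl fun j _ => ?_
        show ((j.1 : ℤ) + 1) * (c (i, j) + if j.1 + 2 = p then l i else 0)
          = ((j.1 : ℤ) + 1) * c (i, j) + ((j.1 : ℤ) + 1) * (if j.1 + 2 = p then l i else 0)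
        ring
      rw [hsplit]
      have h2 : ∑ j : Fin (p - 1), ((j.1 : ℤ) + 1) * (if j.1 + 2 = p then l i else 0)
          = ((p : ℤ) - 1) * l i := by
        rw [Finset.sum_eq_single (⟨p - 2, by omega⟩ : Fin (p - 1))]
        · rw [if_pos (show (p - 2) + 2 = p by omega)]
          have hv : (((⟨p - 2, by omega⟩ : Fin (p - 1)).1 : ℤ)) = (p : ℤ) - 2 := by
            have : (⟨p - 2, by omega⟩ : Fin (p - 1)).1 = p - 2 := rfl
            rw [this]
            omega
          rw [hv]
          ring
        · intro b _ hb
          rw [if_neg fun hc2 => hb (Fin.ext (show b.1 = p - 2 by omega)), mul_zero]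
        · intro h; exact absurd (Finset.mem_univ _) h
      rw [h2]
      exact ⟨l i, by rw [← hli i]; ring⟩
    have hco := key_int hp2 d
      (fun q => c q + if q.2.1 + 2 = p then l q.1 else 0) hBfd hdvd'
    have hdmem : d ∈ AddSubgroup.closure (Set.range (Dv p ν)) :=
      (mem_closure_Dv_iff d).mpr hco
    obtain ⟨m, hm⟩ := hy' (varpi p ν k) (AddSubgroup.subset_closure (Or.inr rfl))
    have hval : Bf p ν y (varpi p ν k) = (∑ i, (k i : ℚ) * (l i : ℚ)) / p := by
      rw [Bf_expand]
      simp only [hc]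
      rw [Fintype.sum_prod_type, Finset.sum_div]
      refine Finset.sum_congr rfl fun i _ => ?_
      have hli2 : (l i : ℚ) = ∑ j : Fin (p - 1), ((j.1 : ℚ) + 1) * (c (i, j) : ℚ) := by
        rw [hli i]
        push_cast
        rfl
      rw [hli2, Finset.mul_sum, Finset.sum_div]
      refine Finset.sum_congr rfl fun j _ => ?_
      simp only [varpi]
      field_simp
    have h3 : (∑ i, (k i : ℚ) * (l i : ℚ)) = (m : ℚ) * p := by
      rw [← div_eq_iff hp0, ← hval, hm]
    have hdvdk : (p : ℤ) ∣ ∑ i, k i * l i := by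
      refine ⟨m, ?_⟩
      have h5 : ((∑ i, k i * l i : ℤ) : ℚ) = ((p * m : ℤ) : ℚ) := by
        push_cast
        rw [h3]
        ring
      exact_mod_cast h5
    exact ⟨d, hdmem, l, hdvdk, by rw [hd]; abel⟩
  · rintro ⟨d, hd, l, hdvd, rfl⟩
    have hdco := (mem_closure_Dv_iff d).mp hd
    have hext : ∀ (i : Fin ν) (t : ℤ), ∃ m : ℤ, extF p ν d i t = m := by
      intro i t
      unfold extF
      split_ifs with h
      · exact hdco _
      · exact ⟨0, rfl⟩
    set y := d + ∑ i, (l i : ℚ) • varpI p ν i with hy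
    have hyDv : ∀ q, ∃ m : ℤ, Bf p ν y (Dv p ν q) = m := by
      intro q
      rw [hy, map_add, LinearMap.add_apply, map_sum, LinearMap.sum_apply]
      have h1 : ∃ m : ℤ, Bf p ν d (Dv p ν q) = m := by
        rw [Bf_Dv_row]
        obtain ⟨m1, e1⟩ := hext q.1 ((q.2.1 : ℤ) - 1)
        obtain ⟨m3, e3⟩ := hext q.1 ((q.2.1 : ℤ) + 1)
        obtain ⟨m2, e2⟩ := hdco q
        exact ⟨m1 - 2 * m2 + m3, by rw [e1, e2, e3]; push_cast; ring⟩
      obtain ⟨m1, e1⟩ := h1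
      have h2 : ∃ m : ℤ, (∑ i, (Bf p ν ((l i : ℚ) • varpI p ν i)) (Dv p ν q)) = (m : ℚ) := by
        apply exists_int_sum
        intro i _
        rw [map_smul, LinearMap.smul_apply, Bf_varpI_Dv, smul_eq_mul]
        by_cases hcon : q.1 = i ∧ q.2.1 + 2 = p
        · exact ⟨-(l i), by rw [if_pos hcon]; push_cast; ring⟩
        · exact ⟨0, by rw [if_neg hcon]; push_cast; ring⟩
      obtain ⟨m2, e2⟩ := h2
      exact ⟨m1 + m2, by rw [e1, e2]; push_cast; ring⟩
    show ∀ s ∈ NL p ν k, ∃ m : ℤ, Bf p ν y s = (m : ℚ)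
    intro s hs
    refine AddSubgroup.closure_induction ?_ ?_ ?_ ?_ hs
    · rintro s' (⟨q, rfl⟩ | rfl)
      · exact hyDv q
      · rw [hy, map_add, LinearMap.add_apply]
        have h1 : ∃ m : ℤ, Bf p ν d (varpi p ν k) = m := by
          rw [Bf_symm, Bf_expand]
          apply exists_int_sum
          intro q _
          obtain ⟨m1, e1⟩ := hdco q
          have h2 : ∃ m : ℤ, Bf p ν (varpi p ν k) (Dv p ν q) = (m : ℚ) := by
            rw [varpi_eq, map_sum, LinearMap.sum_apply]
            apply exists_int_sum
            intro i _
            rw [map_smul, LinearMap.smul_apply, Bf_varpI_Dv, smul_eq_mul]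
            by_cases hcon : q.1 = i ∧ q.2.1 + 2 = p
            · exact ⟨-(k i), by rw [if_pos hcon]; push_cast; ring⟩
            · exact ⟨0, by rw [if_neg hcon]; push_cast; ring⟩
          obtain ⟨m2, e2⟩ := h2
          exact ⟨m1 * m2, by rw [e1, e2]; push_cast; ring⟩
        obtain ⟨m1, e1⟩ := h1
        obtain ⟨m', hm'⟩ := hdvd
        rw [map_sum, LinearMap.sum_apply]
        have h2 : (∑ i, (Bf p ν ((l i : ℚ) • varpI p ν i)) (varpi p ν k))
            = -((p : ℚ) - 1) * m' := by
          have hstep : ∀ i : Fin ν, (Bf p ν ((l i : ℚ) • varpI p ν i)) (varpi p ν k)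
              = (l i : ℚ) * (-(k i : ℚ) * ((p : ℚ) - 1) / p) := by
            intro i
            rw [map_smul, LinearMap.smul_apply, Bf_varpI_varpi hp2, smul_eq_mul]
          rw [Finset.sum_congr rfl fun i _ => hstep i]
          have hfac : ∑ i, (l i : ℚ) * (-(k i : ℚ) * ((p : ℚ) - 1) / p)
              = (-((p : ℚ) - 1) / p) * ∑ i, (k i : ℚ) * (l i : ℚ) := by
            rw [Finset.mul_sum]
            refine Finset.sum_congr rfl fun i _ => by ring
          rw [hfac]
          have hc2 : (∑ i, (k i : ℚ) * (l i : ℚ)) = (p : ℚ) * m' := by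
            have h6 : ((∑ i, k i * l i : ℤ) : ℚ) = (((p : ℤ) * m' : ℤ) : ℚ) := by
              exact_mod_cast congrArg (fun t : ℤ => (t : ℚ)) hm'
            push_cast at h6
            exact h6
          rw [hc2]
          field_simp
        rw [h2]
        exact ⟨m1 + (-((p : ℤ) - 1) * m'), by rw [e1]; push_cast; ring⟩
    · exact ⟨0, by simp⟩
    · rintro a b _ _ ⟨ma, ea⟩ ⟨mb, eb⟩
      exact ⟨ma + mb, by rw [map_add, ea, eb]; push_cast; ring⟩
    · rintro a _ ⟨ma, ea⟩
      exact ⟨-ma, by rw [map_neg, ea]; push_cast; ring⟩
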